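/- For any integer b ≥ 2 and real numbers α, θ, one has max(‖αb − θ‖, ‖α − θb‖) ≥ max(‖α(b²−1)‖, ‖θ(b²−1)‖)/(b+1), where ‖·‖ denotes distance to the nearest integer. -/

import Mathlib

/-- Distance from a real number to the nearest integer. -/
noncomputable def nint (x : ℝ) : ℝ := |x - round x|

lemma nint_eq_norm (x : ℝ) : nint x = ‖(x : AddCircle (1:ℝ))‖ := by
  rw [AddCircle.norm_eq, nint]
  norm_num

lemma nint_neg (x : ℝ) : nint (-x) = nint x := by
  rw [nint_eq_norm, nint_eq_norm, QuotientAddGroup.mk_neg, norm_neg]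

theorem stmt9 (b : ℕ) (hb : 2 ≤ b) (α θ : ℝ) :
    max (nint (α * ((b : ℝ) ^ 2 - 1))) (nint (θ * ((b : ℝ) ^ 2 - 1))) / ((b : ℝ) + 1)
      ≤ max (nint (α * b - θ)) (nint (α - θ * b)) := by
  set u : ℝ := α * b - θ with hu
  set v : ℝ := α - θ * b with hv
  set M : ℝ := max (nint u) (nint v) with hM
  have hMu : nint u ≤ M := le_max_left _ _
  have hMv : nint v ≤ M := le_max_right _ _
  have hb1 : (0:ℝ) < (b:ℝ) + 1 := by positivity
  rw [div_le_iff₀ hb1]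
  have key : ∀ x y : ℝ, nint x ≤ M → nint y ≤ M →
      nint ((b:ℝ) * x - y) ≤ M * ((b:ℝ) + 1) := by
    intro x y hx hy
    rw [nint_eq_norm] at *
    have hbx : (((b:ℝ) * x : ℝ) : AddCircle (1:ℝ)) = b • ((x : ℝ) : AddCircle (1:ℝ)) := by
      rw [show (b:ℝ) * x = (b:ℕ) • x by simp [nsmul_eq_mul]]
      exact QuotientAddGroup.mk_nsmul _ x b
    calc ‖(((b:ℝ) * x - y : ℝ) : AddCircle (1:ℝ))‖
        ≤ ‖(((b:ℝ) * x : ℝ) : AddCircle (1:ℝ))‖ + ‖((y : ℝ) : AddCircle (1:ℝ))‖ := by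
          rw [QuotientAddGroup.mk_sub]
          exact norm_sub_le _ _
      _ ≤ (b : ℝ) * ‖((x : ℝ) : AddCircle (1:ℝ))‖ + ‖((y : ℝ) : AddCircle (1:ℝ))‖ := by
          gcongr
          rw [hbx]
          simpa using norm_nsmul_le (n := b) (a := ((x : ℝ) : AddCircle (1:ℝ)))
      _ ≤ (b : ℝ) * M + M := by
          have h0 : (0:ℝ) ≤ (b:ℝ) := by positivity
          gcongr
      _ = M * ((b:ℝ) + 1) := by ring
  have h1 : α * ((b : ℝ) ^ 2 - 1) = (b:ℝ) * u - v := by rw [hu, hv]; ring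
  have h2 : θ * ((b : ℝ) ^ 2 - 1) = (b:ℝ) * (-v) - (-u) := by rw [hu, hv]; ring
  have hnu : nint (-u) ≤ M := by rw [nint_neg]; exact hMu
  have hnv : nint (-v) ≤ M := by rw [nint_neg]; exact hMv
  apply max_le
  · rw [h1]; exact key u v hMu hMv
  · rw [h2]; exact key (-v) (-u) hnv hnu
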